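/- Let A be an n-dimensional 3-Lie algebra over a field F of characteristic zero with basis x1,...,xn and dual basis x1*,...,xn* of A*, and let D be an involutive derivation on A. Let B = A × A* be the semi-direct product 3-Lie algebra with bracket μ(x1+ξ1, x2+ξ2, x3+ξ3) = [x1,x2,x3] + ad*(x1,x2)ξ3 + ad*(x2,x3)ξ1 + ad*(x3,x1)ξ2, where (ad*(x,y)ξ)(z) = −ξ([x,y,z]). Set r = Σᵢ (xᵢ* ⊗ Dxᵢ − Dxᵢ ⊗ xᵢ*) ∈ B ⊗ B, and write r = Σₐ uₐ ⊗ vₐ (a ranging over 2n indices, with uₐ = xₐ* and vₐ = Dxₐ for a ≤ n, and uₐ = −Dx_{a−n}, vₐ = x_{a−n}* for a > n). Then r is a skew-symmetric solution of the 3-Lie classical Yang–Baxter equation in B: Σ_{a,b,c} ( μ(uₐ,u_b,u_c) ⊗ vₐ ⊗ v_b ⊗ v_c + uₐ ⊗ μ(vₐ,u_b,u_c) ⊗ v_b ⊗ v_c + uₐ ⊗ u_b ⊗ μ(vₐ,v_b,u_c) ⊗ v_c + uₐ ⊗ u_b ⊗ u_c ⊗ μ(vₐ,v_b,v_c) ) =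 0 in B⊗B⊗B⊗B. -/

import Mathlib

open scoped TensorProduct

set_option maxHeartbeats 4000000

theorem stmt15
    (F A : Type*) [Field F] [CharZero F] [AddCommGroup A] [Module F A]
    (n : ℕ) (bas : Module.Basis (Fin n) F A)
    (br : A →ₗ[F] A →ₗ[F] A →ₗ[F] A)
    (halt1 : ∀ x z : A, br x x z = 0)
    (halt2 : ∀ x y : A, br x y y = 0)
    (halt3 : ∀ x y : A, br x y x = 0)
    (hfil : ∀ x1 x2 x3 x4 x5 : A,
      br x1 x2 (br x3 x4 x5) =
        br (br x1 x2 x3) x4 x5 + br x3 (br x1 x2 x4) x5 + br x3 x4 (br x1 x2 x5))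
    (D : A →ₗ[F] A)
    (hder : ∀ x y z : A,
      D (br x y z) = br (D x) y z + br x (D y) z + br x y (D z))
    (hinv : ∀ x : A, D (D x) = x)
    (μ : A × Module.Dual F A → A × Module.Dual F A → A × Module.Dual F A →
      A × Module.Dual F A)
    (hμ : ∀ p q r : A × Module.Dual F A,
      μ p q r = (br p.1 q.1 r.1,
        -(r.2 ∘ₗ br p.1 q.1) + -(p.2 ∘ₗ br q.1 r.1) + -(q.2 ∘ₗ br r.1 p.1)))
    (u v : Fin n ⊕ Fin n → A × Module.Dual F A)
    (hu1 : ∀ i : Fin n, u (Sum.inl i) = (0, bas.coord i))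
    (hu2 : ∀ i : Fin n, u (Sum.inr i) = (-(D (bas i)), 0))
    (hv1 : ∀ i : Fin n, v (Sum.inl i) = (D (bas i), 0))
    (hv2 : ∀ i : Fin n, v (Sum.inr i) = (0, bas.coord i))
    :
    ((∑ a : Fin n ⊕ Fin n, u a ⊗ₜ[F] v a) =
      -∑ a : Fin n ⊕ Fin n, v a ⊗ₜ[F] u a) ∧
    (∑ a : Fin n ⊕ Fin n, ∑ b : Fin n ⊕ Fin n, ∑ c : Fin n ⊕ Fin n,
      (μ (u a) (u b) (u c) ⊗ₜ[F] (v a ⊗ₜ[F] (v b ⊗ₜ[F] v c))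
        + u a ⊗ₜ[F] (μ (v a) (u b) (u c) ⊗ₜ[F] (v b ⊗ₜ[F] v c))
        + u a ⊗ₜ[F] (u b ⊗ₜ[F] (μ (v a) (v b) (u c) ⊗ₜ[F] v c))
        + u a ⊗ₜ[F] (u b ⊗ₜ[F] (u c ⊗ₜ[F] μ (v a) (v b) (v c))))) = 0 := by
  constructor
  · -- skew-symmetry
    have hneg : ∀ (x : A) (φ : Module.Dual F A), ((-x, φ) : A × Module.Dual F A) = -(x, -φ) := by
      intro x φ; rw [Prod.neg_mk, neg_neg]
    have key : ∀ a : Fin n ⊕ Fin n,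
        u a ⊗ₜ[F] v a
          = -(v (Equiv.sumComm (Fin n) (Fin n) a) ⊗ₜ[F] u (Equiv.sumComm (Fin n) (Fin n) a)) := by
      rintro (i | i)
      · rw [Equiv.sumComm_apply, Sum.swap_inl, hu1, hv1, hu2, hv2, hneg, neg_zero,
          TensorProduct.tmul_neg]
        exact (neg_neg ((((0 : A), bas.coord i) : A × Module.Dual F A) ⊗ₜ[F] ((D (bas i), (0 : Module.Dual F A)) : A × Module.Dual F A))).symm
      · rw [Equiv.sumComm_apply, Sum.swap_inr, hu1, hv1, hu2, hv2, hneg, neg_zero,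
          TensorProduct.neg_tmul]
    calc (∑ a : Fin n ⊕ Fin n, u a ⊗ₜ[F] v a)
        = ∑ a : Fin n ⊕ Fin n,
            -(v (Equiv.sumComm (Fin n) (Fin n) a) ⊗ₜ[F] u (Equiv.sumComm (Fin n) (Fin n) a)) :=
          Finset.sum_congr rfl fun a _ => key a
      _ = -∑ a : Fin n ⊕ Fin n,
            (v (Equiv.sumComm (Fin n) (Fin n) a) ⊗ₜ[F] u (Equiv.sumComm (Fin n) (Fin n) a)) :=
          Finset.sum_neg_distrib (G := (A × Module.Dual F A) ⊗[F] (A × Module.Dual F A)) _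
      _ = -∑ a : Fin n ⊕ Fin n, v a ⊗ₜ[F] u a := by
          rw [Equiv.sum_comp (Equiv.sumComm (Fin n) (Fin n)) (fun a => v a ⊗ₜ[F] u a)]
  · -- Yang-Baxter
    classical
    set β : Module.Basis (Fin n ⊕ Fin n) F (A × Module.Dual F A) := bas.prod bas.dualBasis with hβ
    set β4 := β.tensorProduct (β.tensorProduct (β.tensorProduct β)) with hβ4
    apply (β4.repr.map_eq_zero_iff).mp
    ext ⟨s1, s2, s3, s4⟩
    simp only [map_sum, map_add, Finsupp.finset_sum_apply, Finsupp.add_apply,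
      Finsupp.coe_zero, Pi.zero_apply, hβ4, Module.Basis.tensorProduct_repr_tmul_apply]
    have hsw12 : ∀ x y z : A, br x y z = -br y x z := by
      intro x y z
      have h := halt1 (x + y) z
      simp only [map_add, LinearMap.add_apply, halt1, halt2, halt3, zero_add, add_zero] at h
      exact eq_neg_of_add_eq_zero_right h
    have hsw23 : ∀ x y z : A, br x y z = -br x z y := by
      intro x y z
      have h := halt2 x (y + z)
      simp only [map_add, LinearMap.add_apply, halt1, halt2, halt3, zero_add, add_zero] at h
      exact eq_neg_of_add_eq_zero_right h
    have hsw13 : ∀ x y z : A, br x y z = -br z y x := by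
      intro x y z
      have h := halt3 (x + z) y
      simp only [map_add, LinearMap.add_apply, halt1, halt2, halt3, zero_add, add_zero] at h
      exact eq_neg_of_add_eq_zero_right h
    have hcyc : ∀ x y z : A, br x y z = br y z x := by
      intro x y z
      rw [hsw12 x y z, hsw23 y x z, neg_neg]
    have hDbr : ∀ x y z : A, br (D x) (D y) (D z)
        = D (br x (D y) (D z)) + D (br (D x) y (D z)) + D (br (D x) (D y) z) := by
      intro x y z
      have h1 : D (br (D x) (D y) (D z))
          = br x (D y) (D z) + br (D x) y (D z) + br (D x) (D y) z := by
        rw [hder]; simp only [hinv]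
      calc br (D x) (D y) (D z) = D (D (br (D x) (D y) (D z))) := (hinv _).symm
        _ = _ := by rw [h1, map_add, map_add]
    have K1 : ∀ (X : A) (m : Fin n),
        (∑ x : Fin n, bas.repr X x * bas.repr (D (bas x)) m) = bas.repr (D X) m := by
      intro X m
      have h : D X = ∑ x : Fin n, bas.repr X x • D (bas x) := by
        conv_lhs => rw [← Module.Basis.sum_repr bas X]
        rw [map_sum]
        simp only [map_smul]
      rw [h, map_sum, Finsupp.finset_sum_apply]
      simp only [map_smul, Finsupp.smul_apply, smul_eq_mul]
    have K2 : ∀ (X : A) (m : Fin n),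
        (∑ x : Fin n, bas.repr (D (bas x)) m * bas.repr X x) = bas.repr (D X) m := by
      intro X m
      simpa [mul_comm] using K1 X m
    have nite : ∀ (p : Prop) [Decidable p] (x : F), (-if p then x else 0) = if p then -x else 0 := by
      intros p _ x; split <;> simp
    have sumif : ∀ (p : Prop) [Decidable p] (f : Fin n → F),
        (∑ x : Fin n, if p then f x else 0) = if p then ∑ x : Fin n, f x else 0 := by
      intros p _ f; split <;> simp
    rcases s1 with m | i <;> rcases s2 with i2 | i2 <;> rcases s3 with i3 | i3 <;> rcases s4 with i4 | i4 <;>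
      simp only [Fintype.sum_sum_type, hμ, hu1, hu2, hv1, hv2, hβ,
        Module.Basis.prod_repr_inl, Module.Basis.prod_repr_inr, Module.Basis.dualBasis_repr, Module.Basis.coord_apply,
        Module.Basis.repr_self, Finsupp.single_apply, map_zero, map_neg, map_add,
        LinearMap.zero_apply, LinearMap.add_apply, LinearMap.neg_apply, LinearMap.coe_comp,
        Function.comp_apply, LinearMap.zero_comp, LinearMap.comp_zero,
        mul_ite, ite_mul, mul_one, one_mul, mul_zero, zero_mul, neg_zero, add_zero, zero_add,
        neg_neg, mul_neg, neg_mul, Finset.sum_const_zero, Finset.sum_ite_eq, Finset.sum_ite_eq',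
        Finset.mem_univ, if_true, Pi.neg_apply, smul_eq_mul, Finsupp.zero_apply, Finsupp.neg_apply, smul_zero, zero_smul, smul_ite, ite_smul, ite_self, Finset.sum_add_distrib, nite, sumif]
    -- goal 1: (inl m, inr i2, inr i3, inr i4)
    · simp only [Finset.sum_neg_distrib, K1, K2]
      have hV : -(br (D (bas i2)) (D (bas i3)) (D (bas i4)))
          + D (br (D (bas i3)) (D (bas i4)) (bas i2))
          - D (br (D (bas i2)) (D (bas i4)) (bas i3))
          + D (br (D (bas i2)) (D (bas i3)) (bas i4)) = 0 := by
        rw [hDbr (bas i2) (bas i3) (bas i4),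
          show br (D (bas i3)) (D (bas i4)) (bas i2)
              = br (bas i2) (D (bas i3)) (D (bas i4)) from (hcyc _ _ _).symm,
          show br (D (bas i2)) (D (bas i4)) (bas i3)
              = -br (D (bas i2)) (bas i3) (D (bas i4)) from hsw23 _ _ _]
        simp only [map_add, map_neg]
        abel
      have hc := congrArg (fun y => bas.repr y m) hV
      simp only [map_add, map_sub, map_neg, map_zero, Finsupp.add_apply, Finsupp.sub_apply,
        Finsupp.neg_apply, Finsupp.coe_zero, Pi.zero_apply] at hc
      linear_combination hc
    -- goal 2: (inr i, inl i2, inr i3, inr i4)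
    · simp only [Finset.sum_neg_distrib, K1, K2]
      have hV : -(D (br (D (bas i3)) (D (bas i4)) (bas i)))
          + br (D (bas i)) (D (bas i3)) (D (bas i4))
          - D (br (D (bas i4)) (D (bas i)) (bas i3))
          + D (br (D (bas i3)) (D (bas i)) (bas i4)) = 0 := by
        rw [hDbr (bas i) (bas i3) (bas i4),
          show br (D (bas i3)) (D (bas i4)) (bas i)
              = br (bas i) (D (bas i3)) (D (bas i4)) from (hcyc _ _ _).symm,
          show br (D (bas i4)) (D (bas i)) (bas i3)
              = br (D (bas i)) (bas i3) (D (bas i4)) from hcyc _ _ _,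
          show br (D (bas i3)) (D (bas i)) (bas i4)
              = -br (D (bas i)) (D (bas i3)) (bas i4) from hsw12 _ _ _]
        simp only [map_add, map_neg]
        abel
      have hc := congrArg (fun y => bas.repr y i2) hV
      simp only [map_add, map_sub, map_neg, map_zero, Finsupp.add_apply, Finsupp.sub_apply,
        Finsupp.neg_apply, Finsupp.coe_zero, Pi.zero_apply] at hc
      linear_combination hc
    -- goal 3: (inr i, inr i2, inl i3, inr i4)
    · simp only [Finset.sum_neg_distrib, K1, K2]
      have hV : -(D (br (D (bas i4)) (D (bas i2)) (bas i)))
          + D (br (D (bas i4)) (D (bas i)) (bas i2))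
          - br (D (bas i)) (D (bas i2)) (D (bas i4))
          + D (br (D (bas i)) (D (bas i2)) (bas i4)) = 0 := by
        rw [hDbr (bas i) (bas i2) (bas i4),
          show br (D (bas i4)) (D (bas i2)) (bas i)
              = -br (bas i) (D (bas i2)) (D (bas i4)) from hsw13 _ _ _,
          show br (D (bas i4)) (D (bas i)) (bas i2)
              = br (D (bas i)) (bas i2) (D (bas i4)) from hcyc _ _ _]
        simp only [map_add, map_neg]
        abel
      have hc := congrArg (fun y => bas.repr y i3) hV
      simp only [map_add, map_sub, map_neg, map_zero, Finsupp.add_apply, Finsupp.sub_apply,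
        Finsupp.neg_apply, Finsupp.coe_zero, Pi.zero_apply] at hc
      linear_combination hc
    -- goal 4: (inr i, inr i2, inr i3, inl i4)
    · simp only [Finset.sum_neg_distrib, K1, K2]
      have hV : -(D (br (D (bas i2)) (D (bas i3)) (bas i)))
          + D (br (D (bas i)) (D (bas i3)) (bas i2))
          - D (br (D (bas i)) (D (bas i2)) (bas i3))
          + br (D (bas i)) (D (bas i2)) (D (bas i3)) = 0 := by
        rw [hDbr (bas i) (bas i2) (bas i3),
          show br (D (bas i2)) (D (bas i3)) (bas i)
              = br (bas i) (D (bas i2)) (D (bas i3)) from (hcyc _ _ _).symm,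
          show br (D (bas i)) (D (bas i3)) (bas i2)
              = -br (D (bas i)) (bas i2) (D (bas i3)) from hsw23 _ _ _]
        simp only [map_add, map_neg]
        abel
      have hc := congrArg (fun y => bas.repr y i4) hV
      simp only [map_add, map_sub, map_neg, map_zero, Finsupp.add_apply, Finsupp.sub_apply,
        Finsupp.neg_apply, Finsupp.coe_zero, Pi.zero_apply] at hc
      linear_combination hc
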